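/- Let B be an n×k real matrix, let ε, δ ∈ (0,1) with ε ≤ δ and δ < 1/2, and let μ > 0. Assume B satisfies the RIP over 𝓗 with constant ε and the R-RIP over 𝓗−𝓗 with parameter δ and precision μ. Let y̌ ∈ ℝ^k be nonzero, let ř be an ordered selection, let w ∈ ℝ^m, and let x̌ = S_ř B y̌ + w. Let η ≥ 1 and suppose (ŷ, r̂) merely satisfies the feasibility condition ‖S_r̂ B ŷ − x̌‖ ≤ η·‖w‖. Then d((ŷ,r̂),(y̌,ř)) ≤ χ·√m·‖y̌‖ with χ = max{ μ·√((1+ε)/(1−ε))·(1 + (η+1)·‖w‖/‖S_ř B y̌‖), (η+1)·‖w‖/(‖S_ř B y̌‖·√(1−2δ)) }. -/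

import Mathlib

set_option maxHeartbeats 1000000


/-- Apply the ordered-selection sampling: `(S_r B y) i = ⟨B_{r i}, y⟩`. -/
noncomputable def selApply {n k m : ℕ} (B : Matrix (Fin n) (Fin k) ℝ) (r : Fin m → Fin n)
    (y : EuclideanSpace ℝ (Fin k)) : EuclideanSpace ℝ (Fin m) :=
  WithLp.toLp 2 (fun i => ∑ j, B (r i) j * y j)

/-- Similarity count `c(r,r') = #{i : r i = r' i}`. -/
def simCount {n m : ℕ} (r r' : Fin m → Fin n) : ℕ :=
  (Finset.univ.filter (fun i => r i = r' i)).card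

/-- Distance `d((y,r),(y',r')) = √(m‖y‖² + m‖y'‖² − 2 c(r,r') ⟨y,y'⟩)`. -/
noncomputable def selDist {n k m : ℕ} (y y' : EuclideanSpace ℝ (Fin k))
    (r r' : Fin m → Fin n) : ℝ :=
  Real.sqrt ((m : ℝ) * ‖y‖ ^ 2 + (m : ℝ) * ‖y'‖ ^ 2
    - 2 * (simCount r r' : ℝ) * (inner ℝ y y' : ℝ))

/-- `B` satisfies the RIP over 𝓗 with constant `ε`. -/
def RIPoverH {n k m : ℕ} (B : Matrix (Fin n) (Fin k) ℝ) (ε : ℝ) : Prop :=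
  ∀ (y : EuclideanSpace ℝ (Fin k)) (r : Fin m → Fin n), StrictMono r →
    (1 - ε) * m * ‖y‖ ^ 2 ≤ ‖selApply B r y‖ ^ 2 ∧
    ‖selApply B r y‖ ^ 2 ≤ (1 + ε) * m * ‖y‖ ^ 2

/-- `B` satisfies the relaxed RIP over 𝓗−𝓗 with parameter `δ` and precision `μ`. -/
def RRIPoverHdiffH {n k m : ℕ} (B : Matrix (Fin n) (Fin k) ℝ) (δ μ : ℝ) : Prop :=
  ∀ (y y' : EuclideanSpace ℝ (Fin k)) (r r' : Fin m → Fin n),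
    StrictMono r → StrictMono r' →
    selDist y y' r r' ≥ μ * max (Real.sqrt m * ‖y‖) (Real.sqrt m * ‖y'‖) →
    (1 - δ) * (selDist y y' r r') ^ 2 ≤ ‖selApply B r y - selApply B r' y'‖ ^ 2 ∧
    ‖selApply B r y - selApply B r' y'‖ ^ 2 ≤ (1 + δ) * (selDist y y' r r') ^ 2

/-- Remark 2: recovery guarantee for any feasible estimate under RIP and R-RIP. -/
theorem recovery_guarantee_feasible {n k m : ℕ} (B : Matrix (Fin n) (Fin k) ℝ)
    (ε δ μ : ℝ) (hε0 : 0 < ε) (hε1 : ε < 1) (hδ0 : 0 < δ) (hδ1 : δ < 1)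
    (hεδ : ε ≤ δ) (hδhalf : δ < 1 / 2) (hμ : 0 < μ)
    (hRIP : RIPoverH (m := m) B ε) (hRRIP : RRIPoverHdiffH (m := m) B δ μ)
    (ychk : EuclideanSpace ℝ (Fin k)) (hychk : ychk ≠ 0)
    (rchk : Fin m → Fin n) (hrchk : StrictMono rchk)
    (w : EuclideanSpace ℝ (Fin m))
    (xchk : EuclideanSpace ℝ (Fin m)) (hxchk : xchk = selApply B rchk ychk + w)
    (yhat : EuclideanSpace ℝ (Fin k)) (rhat : Fin m → Fin n) (hrhat : StrictMono rhat)
    (η : ℝ) (hη : 1 ≤ η)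
    (hfeas : ‖selApply B rhat yhat - xchk‖ ≤ η * ‖w‖) :
    selDist yhat ychk rhat rchk ≤
      max (μ * Real.sqrt ((1 + ε) / (1 - ε)) * (1 + (η + 1) * ‖w‖ / ‖selApply B rchk ychk‖))
          ((η + 1) * ‖w‖ / (‖selApply B rchk ychk‖ * Real.sqrt (1 - 2 * δ)))
        * Real.sqrt m * ‖ychk‖ := by
  rcases Nat.eq_zero_or_pos m with hm | hm
  · subst hm
    have hd : selDist yhat ychk rhat rchk = 0 := by
      simp [selDist, simCount]
    rw [hd]
    simp
  · set S := selApply B rchk ychk with hSdef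
    set T := selApply B rhat yhat with hTdef
    set d := selDist yhat ychk rhat rchk with hddef
    have hdnn : 0 ≤ d := Real.sqrt_nonneg _
    have hmpos : (0:ℝ) < m := by exact_mod_cast hm
    have hny : 0 < ‖ychk‖ := norm_pos_iff.mpr hychk
    have hwnn : 0 ≤ ‖w‖ := norm_nonneg w
    have hε1' : (0:ℝ) < 1 - ε := by linarith
    have hηw : 0 ≤ (η + 1) * ‖w‖ := mul_nonneg (by linarith) hwnn
    obtain ⟨hS1, hS2⟩ := hRIP ychk rchk hrchk
    obtain ⟨hT1, _⟩ := hRIP yhat rhat hrhat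
    have hSpos : 0 < ‖S‖ := by
      have h0 : 0 < (1 - ε) * (m:ℝ) * ‖ychk‖ ^ 2 :=
        mul_pos (mul_pos hε1' hmpos) (pow_pos hny 2)
      nlinarith [norm_nonneg S]
    have hTS : ‖T - S‖ ≤ (η + 1) * ‖w‖ := by
      have hb : T - S = (T - xchk) + w := by rw [hxchk]; abel
      calc ‖T - S‖ = ‖(T - xchk) + w‖ := by rw [hb]
        _ ≤ ‖T - xchk‖ + ‖w‖ := norm_add_le _ _
        _ ≤ η * ‖w‖ + ‖w‖ := by linarith [hfeas]
        _ = (η + 1) * ‖w‖ := by ring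
    have hSub : ‖S‖ ≤ Real.sqrt (1 + ε) * (Real.sqrt m * ‖ychk‖) := by
      have h1 : ‖S‖ ≤ Real.sqrt ((1 + ε) * m * ‖ychk‖ ^ 2) := by
        rw [← Real.sqrt_sq (norm_nonneg S)]
        exact Real.sqrt_le_sqrt hS2
      calc ‖S‖ ≤ Real.sqrt ((1 + ε) * m * ‖ychk‖ ^ 2) := h1
        _ = Real.sqrt (1 + ε) * (Real.sqrt m * ‖ychk‖) := by
          rw [Real.sqrt_mul (mul_nonneg (by linarith) hmpos.le),
            Real.sqrt_mul (by linarith : (0:ℝ) ≤ 1 + ε), Real.sqrt_sq hny.le]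
          ring
    have hTlb : Real.sqrt (1 - ε) * (Real.sqrt m * ‖yhat‖) ≤ ‖T‖ := by
      have h1 : Real.sqrt ((1 - ε) * m * ‖yhat‖ ^ 2) ≤ ‖T‖ := by
        rw [← Real.sqrt_sq (norm_nonneg T)]
        exact Real.sqrt_le_sqrt hT1
      calc Real.sqrt (1 - ε) * (Real.sqrt m * ‖yhat‖)
          = Real.sqrt ((1 - ε) * m * ‖yhat‖ ^ 2) := by
            rw [Real.sqrt_mul (mul_nonneg hε1'.le hmpos.le), Real.sqrt_mul hε1'.le,
              Real.sqrt_sq (norm_nonneg _)]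
            ring
        _ ≤ ‖T‖ := h1
    rcases le_or_gt (μ * max (Real.sqrt m * ‖yhat‖) (Real.sqrt m * ‖ychk‖)) d with hcase | hcase
    · obtain ⟨hR1, _⟩ := hRRIP yhat ychk rhat rchk hrhat hrchk hcase
      have h2 : (1 - δ) * d ^ 2 ≤ ((η + 1) * ‖w‖) ^ 2 :=
        hR1.trans (pow_le_pow_left₀ (norm_nonneg _) hTS 2)
      have ha : d * Real.sqrt (1 - δ) ≤ (η + 1) * ‖w‖ := by
        have h3 := Real.sqrt_le_sqrt h2
        rw [Real.sqrt_mul (by linarith : (0:ℝ) ≤ 1 - δ), Real.sqrt_sq hdnn,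
          Real.sqrt_sq hηw] at h3
        rw [mul_comm]
        exact h3
      have h2δ : (0:ℝ) < 1 - 2 * δ := by linarith
      have hprod : Real.sqrt (1 + ε) * Real.sqrt (1 - 2 * δ) ≤ Real.sqrt (1 - δ) := by
        rw [← Real.sqrt_mul (by linarith : (0:ℝ) ≤ 1 + ε)]
        exact Real.sqrt_le_sqrt (by nlinarith)
      have hb : ‖S‖ * Real.sqrt (1 - 2 * δ) ≤ Real.sqrt (1 - δ) * (Real.sqrt m * ‖ychk‖) := by
        calc ‖S‖ * Real.sqrt (1 - 2 * δ)
            ≤ (Real.sqrt (1 + ε) * (Real.sqrt m * ‖ychk‖)) * Real.sqrt (1 - 2 * δ) :=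
              mul_le_mul_of_nonneg_right hSub (Real.sqrt_nonneg _)
          _ = (Real.sqrt (1 + ε) * Real.sqrt (1 - 2 * δ)) * (Real.sqrt m * ‖ychk‖) := by ring
          _ ≤ Real.sqrt (1 - δ) * (Real.sqrt m * ‖ychk‖) :=
              mul_le_mul_of_nonneg_right hprod (by positivity)
      have hden : 0 < ‖S‖ * Real.sqrt (1 - 2 * δ) := mul_pos hSpos (Real.sqrt_pos.mpr h2δ)
      have hkey : d ≤ (η + 1) * ‖w‖ / (‖S‖ * Real.sqrt (1 - 2 * δ)) * Real.sqrt m * ‖ychk‖ := by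
        rw [show (η + 1) * ‖w‖ / (‖S‖ * Real.sqrt (1 - 2 * δ)) * Real.sqrt m * ‖ychk‖
            = ((η + 1) * ‖w‖ * (Real.sqrt m * ‖ychk‖)) / (‖S‖ * Real.sqrt (1 - 2 * δ)) from by
              ring,
          le_div_iff₀ hden]
        calc d * (‖S‖ * Real.sqrt (1 - 2 * δ))
            ≤ d * (Real.sqrt (1 - δ) * (Real.sqrt m * ‖ychk‖)) :=
              mul_le_mul_of_nonneg_left hb hdnn
          _ = (d * Real.sqrt (1 - δ)) * (Real.sqrt m * ‖ychk‖) := by ring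
          _ ≤ ((η + 1) * ‖w‖) * (Real.sqrt m * ‖ychk‖) :=
              mul_le_mul_of_nonneg_right ha (by positivity)
      refine hkey.trans ?_
      gcongr
      exact le_max_right _ _
    · have hc : 0 ≤ (η + 1) * ‖w‖ / ‖S‖ := div_nonneg hηw hSpos.le
      have hppos : 0 < Real.sqrt (1 - ε) := Real.sqrt_pos.mpr hε1'
      have hsq : Real.sqrt ((1 + ε) / (1 - ε)) = Real.sqrt (1 + ε) / Real.sqrt (1 - ε) :=
        Real.sqrt_div (by linarith) _
      have hq1 : (1:ℝ) ≤ Real.sqrt ((1 + ε) / (1 - ε)) := by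
        have h := Real.sqrt_le_sqrt ((one_le_div hε1').mpr (by linarith : 1 - ε ≤ 1 + ε))
        rwa [Real.sqrt_one] at h
      have hsC : ‖S‖ * (1 + (η + 1) * ‖w‖ / ‖S‖) = ‖S‖ + (η + 1) * ‖w‖ := by
        field_simp
      have hy1 : μ * (Real.sqrt m * ‖ychk‖) ≤
          μ * Real.sqrt ((1 + ε) / (1 - ε)) * (1 + (η + 1) * ‖w‖ / ‖S‖) * Real.sqrt m * ‖ychk‖ := by
        have hFG : (1:ℝ) ≤ Real.sqrt ((1 + ε) / (1 - ε)) * (1 + (η + 1) * ‖w‖ / ‖S‖) := by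
          nlinarith
        nlinarith [mul_le_mul_of_nonneg_left hFG
          (mul_nonneg hμ.le (mul_nonneg (Real.sqrt_nonneg (m:ℝ)) hny.le))]
      have hy2 : μ * (Real.sqrt m * ‖yhat‖) ≤
          μ * Real.sqrt ((1 + ε) / (1 - ε)) * (1 + (η + 1) * ‖w‖ / ‖S‖) * Real.sqrt m * ‖ychk‖ := by
        rw [hsq, show μ * (Real.sqrt (1 + ε) / Real.sqrt (1 - ε)) * (1 + (η + 1) * ‖w‖ / ‖S‖) *
              Real.sqrt m * ‖ychk‖
            = μ * Real.sqrt (1 + ε) * (1 + (η + 1) * ‖w‖ / ‖S‖) * (Real.sqrt m * ‖ychk‖) /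
              Real.sqrt (1 - ε) from by ring,
          le_div_iff₀ hppos]
        have hTub : ‖T‖ ≤ ‖S‖ + (η + 1) * ‖w‖ := by
          calc ‖T‖ = ‖(T - S) + S‖ := by rw [sub_add_cancel]
            _ ≤ ‖T - S‖ + ‖S‖ := norm_add_le _ _
            _ ≤ (η + 1) * ‖w‖ + ‖S‖ := by linarith
            _ = ‖S‖ + (η + 1) * ‖w‖ := by ring
        have h1 : Real.sqrt (1 - ε) * (Real.sqrt m * ‖yhat‖) ≤
            ‖S‖ * (1 + (η + 1) * ‖w‖ / ‖S‖) := by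
          rw [hsC]; exact hTlb.trans hTub
        have h2 : ‖S‖ * (1 + (η + 1) * ‖w‖ / ‖S‖) ≤
            Real.sqrt (1 + ε) * (Real.sqrt m * ‖ychk‖) * (1 + (η + 1) * ‖w‖ / ‖S‖) :=
          mul_le_mul_of_nonneg_right hSub (by linarith)
        nlinarith [mul_le_mul_of_nonneg_left (h1.trans h2) hμ.le]
      have hmax : μ * max (Real.sqrt m * ‖yhat‖) (Real.sqrt m * ‖ychk‖) ≤
          μ * Real.sqrt ((1 + ε) / (1 - ε)) * (1 + (η + 1) * ‖w‖ / ‖S‖) * Real.sqrt m * ‖ychk‖ := by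
        rcases le_total (Real.sqrt m * ‖yhat‖) (Real.sqrt m * ‖ychk‖) with h | h
        · rw [max_eq_right h]; exact hy1
        · rw [max_eq_left h]; exact hy2
      refine (hcase.le.trans hmax).trans ?_
      gcongr
      exact le_max_left _ _
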